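/- Let K be a nonempty compact convex subset of ℝ^{n+1}. Then d_K is differentiable at every point x ∉ K, and Π_K(x) = x − d_K(x)·Dd_K(x), where Dd_K(x) is the gradient of d_K at x (a unit vector). -/

import Mathlib

open Metric Real

lemma aux_hasFDerivAt_norm {F : Type*} [NormedAddCommGroup F] [InnerProductSpace ℝ F]
    {v : F} (hv : v ≠ 0) :
    HasFDerivAt (fun y : F => ‖y‖) (innerSL ℝ (‖v‖⁻¹ • v)) v := by
  have h1 : HasFDerivAt (fun y : F => ‖y‖ ^ 2) (2 • innerSL ℝ v) v :=
    (hasStrictFDerivAt_norm_sq v).hasFDerivAt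
  have hv' : ‖v‖ ≠ 0 := norm_ne_zero_iff.mpr hv
  have h2 : (fun y : F => ‖y‖ ^ 2) v ≠ 0 := pow_ne_zero 2 hv'
  have h3 := h1.sqrt h2
  have heq : (fun y : F => Real.sqrt (‖y‖ ^ 2)) = fun y : F => ‖y‖ := by
    ext y; rw [Real.sqrt_sq (norm_nonneg y)]
  rw [heq] at h3
  convert h3 using 1
  ext w
  simp only [innerSL_apply_apply, inner_smul_left, ContinuousLinearMap.coe_smul',
    Pi.smul_apply, ContinuousLinearMap.smul_apply, Real.sqrt_sq (norm_nonneg v),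
    smul_eq_mul, RCLike.conj_to_real, two_smul, ContinuousLinearMap.add_apply]
  field_simp
  ring

theorem stmt15 (n : ℕ) (K : Set (EuclideanSpace ℝ (Fin (n + 1)))) (hK : IsCompact K)
    (hKc : Convex ℝ K) (hKne : K.Nonempty)
    (x : EuclideanSpace ℝ (Fin (n + 1))) (hx : x ∉ K) :
    ∃ g : EuclideanSpace ℝ (Fin (n + 1)), ‖g‖ = 1 ∧
      HasGradientAt (fun y => Metric.infDist y K) g x ∧
      (x - Metric.infDist x K • g) ∈ K ∧
      ∀ z ∈ K, dist x (x - Metric.infDist x K • g) ≤ dist x z := by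
  classical
  obtain ⟨p, hpK, hp⟩ :=
    exists_norm_eq_iInf_of_complete_convex hKne hK.isClosed.isComplete hKc x
  haveI : Nonempty K := hKne.to_subtype
  -- infDist x K = ‖x - p‖
  have hinf : Metric.infDist x K = ‖x - p‖ := by
    rw [Metric.infDist_eq_iInf, hp]
    simp only [dist_eq_norm]
  have hxp : x - p ≠ 0 := by
    intro h
    exact hx (sub_eq_zero.mp h ▸ hpK)
  have hnorm_pos : (0:ℝ) < ‖x - p‖ := norm_pos_iff.mpr hxp
  set g : EuclideanSpace ℝ (Fin (n + 1)) := ‖x - p‖⁻¹ • (x - p) with hg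
  have hgnorm : ‖g‖ = 1 := by
    rw [hg, norm_smul, norm_inv, norm_norm, inv_mul_cancel₀ hnorm_pos.ne']
  -- projection characterization
  have hchar : ∀ w ∈ K, inner ℝ (x - p) (w - p) ≤ (0:ℝ) :=
    (norm_eq_iInf_iff_real_inner_le_zero hKc hpK).mp hp
  have hsmul : Metric.infDist x K • g = x - p := by
    rw [hinf, hg, smul_smul, mul_inv_cancel₀ hnorm_pos.ne', one_smul]
  refine ⟨g, hgnorm, ?_, ?_, ?_⟩
  · -- differentiability
    rw [hasGradientAt_iff_hasFDerivAt]
    have htd : (InnerProductSpace.toDual ℝ _ g : EuclideanSpace ℝ (Fin (n+1)) →L[ℝ] ℝ)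
        = innerSL ℝ g := by rfl
    rw [htd]
    -- the comparison function y ↦ ‖y - p‖ has this derivative at x
    have hcomp : HasFDerivAt (fun y : EuclideanSpace ℝ (Fin (n+1)) => ‖y - p‖)
        (innerSL ℝ g) x := by
      have h1 : HasFDerivAt (fun y : EuclideanSpace ℝ (Fin (n+1)) => y - p)
          (ContinuousLinearMap.id ℝ _) x := (hasFDerivAt_id x).sub_const p
      have h2 := (aux_hasFDerivAt_norm hxp).comp x h1
      simpa [hg, Function.comp_def] using h2
    rw [hasFDerivAt_iff_isLittleO_nhds_zero] at hcomp ⊢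
    -- lower bound: for all y, infDist y K ≥ ⟪g, y - p⟫
    have hlow : ∀ y : EuclideanSpace ℝ (Fin (n+1)),
        (inner ℝ g (y - p) : ℝ) ≤ Metric.infDist y K := by
      intro y
      rw [Metric.infDist_eq_iInf]
      refine le_ciInf fun w => ?_
      have h1 : (inner ℝ g (y - (w:EuclideanSpace ℝ (Fin (n+1)))) : ℝ) ≤ dist y w := by
        calc (inner ℝ g (y - (w:EuclideanSpace ℝ (Fin (n+1)))) : ℝ)
            ≤ ‖g‖ * ‖y - (w:EuclideanSpace ℝ (Fin (n+1)))‖ := real_inner_le_norm _ _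
          _ = dist y w := by rw [hgnorm, one_mul, dist_eq_norm]
      have h2 : (0:ℝ) ≤ inner ℝ g ((p:EuclideanSpace ℝ (Fin (n+1))) - w) := by
        rw [hg, inner_smul_left]
        have : (inner ℝ (x - p) ((p:EuclideanSpace ℝ (Fin (n+1))) - w) : ℝ) =
            -(inner ℝ (x - p) ((w:EuclideanSpace ℝ (Fin (n+1))) - p)) := by
          rw [← inner_neg_right, neg_sub]
        rw [RCLike.conj_to_real, this]
        have := hchar w w.2
        have hn : (0:ℝ) ≤ ‖x - p‖⁻¹ := by positivity
        nlinarith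
      have : (inner ℝ g (y - p) : ℝ) = inner ℝ g (y - (w:EuclideanSpace ℝ (Fin (n+1))))
          + inner ℝ g ((w:EuclideanSpace ℝ (Fin (n+1))) - p) := by
        rw [← inner_add_right]; congr 1; abel
      rw [this]
      have h2' : (inner ℝ g ((w:EuclideanSpace ℝ (Fin (n+1))) - p) : ℝ) ≤ 0 := by
        have : ((w:EuclideanSpace ℝ (Fin (n+1))) - p) = -(p - w) := by abel
        rw [this, inner_neg_right]; linarith
      linarith
    have hgxp : (inner ℝ g (x - p) : ℝ) = ‖x - p‖ := by
      rw [hg, inner_smul_left, RCLike.conj_to_real, real_inner_self_eq_norm_sq]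
      field_simp
    have hbound : ∀ h : EuclideanSpace ℝ (Fin (n+1)),
        ‖Metric.infDist (x + h) K - Metric.infDist x K - (innerSL ℝ g) h‖ ≤
        ‖‖x + h - p‖ - ‖x - p‖ - (innerSL ℝ g) h‖ := by
      intro h
      have hle : Metric.infDist (x + h) K ≤ ‖x + h - p‖ := by
        rw [← dist_eq_norm]
        exact Metric.infDist_le_dist_of_mem hpK
      have hge : Metric.infDist x K + (inner ℝ g h : ℝ) ≤ Metric.infDist (x + h) K := by
        have := hlow (x + h)
        have heq : (inner ℝ g (x + h - p) : ℝ) = inner ℝ g (x - p) + inner ℝ g h := by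
          rw [← inner_add_right]; congr 1; abel
        rw [heq, hgxp, ← hinf] at this
        linarith
      have e1 : (0:ℝ) ≤ Metric.infDist (x + h) K - Metric.infDist x K - (innerSL ℝ g) h := by
        simp only [innerSL_apply_apply]; linarith
      have e2 : Metric.infDist (x + h) K - Metric.infDist x K - (innerSL ℝ g) h ≤
          ‖x + h - p‖ - ‖x - p‖ - (innerSL ℝ g) h := by
        rw [hinf]; simp only [innerSL_apply_apply]; linarith
      rw [Real.norm_eq_abs, Real.norm_eq_abs, abs_of_nonneg e1]
      exact le_trans e2 (le_abs_self _)
    exact (Asymptotics.isBigO_of_le _ hbound).trans_isLittleO hcomp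
  · rw [hsmul]; simpa using hpK
  · intro z hz
    rw [hsmul]
    have : x - (x - p) = p := by abel
    rw [this, dist_eq_norm, ← hinf]
    rw [dist_eq_norm]
    exact Metric.infDist_le_dist_of_mem hz |>.trans_eq (dist_eq_norm x z) |>.trans_eq rfl
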